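/- Let d ≥ 1, ε > 0, let V : ℝ^d → ℝ be Lipschitz with constant L (i.e. |V(a)−V(b)| ≤ L|a−b| for all a,b), let Ψ ∈ L²(ℝ^d;ℂ), and let φ be a Schwartz function on ℝ^d × ℝ^d. Then the integrand below is absolutely integrable and | ∫_{ℝ^d×ℝ^d} [ (V(x+εy/2) − V(x−εy/2))/ε ] · Ψ(x+εy/2) · conj(Ψ(x−εy/2)) · (F_pφ)(x,y) d(x,y) | ≤ L · ‖Ψ‖² · ∫_{ℝ^d} |y| · sup_{x∈ℝ^d} |(F_pφ)(x,y)| dy. -/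

import Mathlib

open MeasureTheory Filter
open scoped RealInnerProductSpace

section AuxWigner

open scoped ContDiff FourierTransform ENNReal NNReal

variable {G H W : Type*} [NormedAddCommGroup G] [NormedSpace ℝ G]
  [NormedAddCommGroup H] [NormedSpace ℝ H]
  [NormedAddCommGroup W] [NormedSpace ℝ W]

lemma my_iteratedFDeriv_comp_const_add {f : G → W} (hf : ContDiff ℝ ∞ f) (a : G) (n : ℕ) :
    ∀ x, iteratedFDeriv ℝ n (fun y => f (a + y)) x = iteratedFDeriv ℝ n f (a + x) := by
  induction n with
  | zero => intro x; ext m; simp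
  | succ n ih =>
    intro x
    rw [iteratedFDeriv_succ_eq_comp_left, iteratedFDeriv_succ_eq_comp_left]
    simp only [Function.comp_apply]
    congr 1
    rw [funext ih]
    have hdiff : DifferentiableAt ℝ (iteratedFDeriv ℝ n f) (a + x) :=
      (hf.differentiable_iteratedFDeriv (mod_cast ENat.coe_lt_top n)) (a + x)
    have h2 : HasFDerivAt (fun y => iteratedFDeriv ℝ n f (a + y))
        (fderiv ℝ (iteratedFDeriv ℝ n f) (a + x)) x := by
      have := hdiff.hasFDerivAt.comp x ((hasFDerivAt_id x).const_add a)
      exact this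
    exact h2.fderiv

lemma my_norm_iteratedFDeriv_slice {f : G × H → W} (hf : ContDiff ℝ ∞ f) (x : G) (n : ℕ)
    (p : H) :
    ‖iteratedFDeriv ℝ n (fun p => f (x, p)) p‖ ≤ ‖iteratedFDeriv ℝ n f (x, p)‖ := by
  have hshift : ContDiff ℝ ∞ (fun q : G × H => f ((x, 0) + q)) :=
    hf.comp (contDiff_const.add contDiff_id)
  have heq : (fun p : H => f (x, p)) =
      (fun q : G × H => f ((x, 0) + q)) ∘ (ContinuousLinearMap.inr ℝ G H) := by
    funext p
    simp [Prod.mk_add_mk]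
  rw [heq, ContinuousLinearMap.iteratedFDeriv_comp_right _ hshift _ (by exact_mod_cast le_top)]
  refine le_trans (ContinuousMultilinearMap.norm_compContinuousLinearMap_le _ _) ?_
  have h1 : iteratedFDeriv ℝ n (fun q : G × H => f ((x, 0) + q))
      ((ContinuousLinearMap.inr ℝ G H) p) = iteratedFDeriv ℝ n f (x, p) := by
    rw [my_iteratedFDeriv_comp_const_add hf (x, 0) n]
    congr 1
    simp
  rw [h1]
  have h2 : (∏ _i : Fin n, ‖(ContinuousLinearMap.inr ℝ G H)‖) ≤ 1 := by
    refine Finset.prod_le_one (fun _ _ => norm_nonneg _) (fun _ _ => ?_)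
    refine ContinuousLinearMap.opNorm_le_bound _ zero_le_one (fun q => ?_)
    simp [Prod.norm_def]
  calc ‖iteratedFDeriv ℝ n f (x, p)‖ * ∏ _i : Fin n, ‖(ContinuousLinearMap.inr ℝ G H)‖
      ≤ ‖iteratedFDeriv ℝ n f (x, p)‖ * 1 :=
        mul_le_mul_of_nonneg_left h2 (norm_nonneg _)
    _ = ‖iteratedFDeriv ℝ n f (x, p)‖ := mul_one _

/-- The slice of a Schwartz function on a product, as a Schwartz function. -/
noncomputable def mySlice (φ : SchwartzMap (G × H) ℂ) (x : G) : SchwartzMap H ℂ where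
  toFun p := φ (x, p)
  smooth' := φ.smooth'.comp (contDiff_const.prodMk contDiff_id)
  decay' k n := by
    refine ⟨SchwartzMap.seminorm ℝ k n φ, fun p => ?_⟩
    calc ‖p‖ ^ k * ‖iteratedFDeriv ℝ n (fun p => φ (x, p)) p‖
        ≤ ‖(x, p)‖ ^ k * ‖iteratedFDeriv ℝ n (⇑φ) (x, p)‖ := by
          refine mul_le_mul (pow_le_pow_left₀ (norm_nonneg _) (norm_snd_le (x, p)) k)
            (my_norm_iteratedFDeriv_slice φ.smooth' x n p) (norm_nonneg _) (by positivity)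
      _ ≤ SchwartzMap.seminorm ℝ k n φ := SchwartzMap.le_seminorm ℝ k n φ (x, p)

@[simp] lemma mySlice_apply (φ : SchwartzMap (G × H) ℂ) (x : G) (p : H) :
    mySlice φ x p = φ (x, p) := rfl

lemma my_seminorm_slice_le (φ : SchwartzMap (G × H) ℂ) (x : G) (k n : ℕ) :
    SchwartzMap.seminorm ℂ k n (mySlice φ x) ≤ SchwartzMap.seminorm ℂ k n φ := by
  refine SchwartzMap.seminorm_le_bound ℂ k n _ (apply_nonneg _ _) (fun p => ?_)
  calc ‖p‖ ^ k * ‖iteratedFDeriv ℝ n (⇑(mySlice φ x)) p‖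
      ≤ ‖(x, p)‖ ^ k * ‖iteratedFDeriv ℝ n (⇑φ) (x, p)‖ := by
        refine mul_le_mul (pow_le_pow_left₀ (norm_nonneg _) (norm_snd_le (x, p)) k)
          (my_norm_iteratedFDeriv_slice φ.smooth' x n p) (norm_nonneg _) (by positivity)
    _ ≤ SchwartzMap.seminorm ℂ k n φ := SchwartzMap.le_seminorm ℂ k n φ (x, p)

end AuxWigner

section AuxDecay

open scoped FourierTransform ENNReal NNReal

variable {G : Type*} [NormedAddCommGroup G] [InnerProductSpace ℝ G] [FiniteDimensional ℝ G]
  [MeasurableSpace G] [BorelSpace G]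
  {H : Type*} [NormedAddCommGroup H] [NormedSpace ℝ H]

/-- Uniform-in-`x` polynomial decay of the Fourier transform of the slices. -/
lemma my_exists_decay (φ : SchwartzMap (H × G) ℂ) (k : ℕ) :
    ∃ C : ℝ, 0 ≤ C ∧ ∀ (x : H) (w : G), ‖w‖ ^ k * ‖𝓕 (⇑(mySlice φ x)) w‖ ≤ C := by
  set T := (SchwartzMap.fourierTransformCLM ℂ (V := G) (E := ℂ)) with hT
  set q : Seminorm ℂ (SchwartzMap G ℂ) :=
    (SchwartzMap.seminorm ℂ k 0).comp T.toLinearMap with hq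
  have hqc : Continuous q := by
    have : Continuous fun f => (SchwartzMap.seminorm ℂ k 0) (T f) :=
      ((schwartz_withSeminorms ℂ G ℂ).continuous_seminorm (k, 0)).comp T.continuous
    exact this
  obtain ⟨s, C, hC0, hle⟩ :=
    Seminorm.bound_of_continuous (schwartz_withSeminorms ℂ G ℂ) q hqc
  refine ⟨C * (s.sup (schwartzSeminormFamily ℂ (H × G) ℂ)) φ, by positivity, ?_⟩
  intro x w
  have h1 : ‖w‖ ^ k * ‖𝓕 (⇑(mySlice φ x)) w‖ ≤ SchwartzMap.seminorm ℂ k 0 (T (mySlice φ x)) := by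
    have := SchwartzMap.norm_pow_mul_le_seminorm ℂ (T (mySlice φ x)) k w
    exact this
  have h2 : q (mySlice φ x) ≤ C * (s.sup (schwartzSeminormFamily ℂ G ℂ)) (mySlice φ x) := by
    have := hle (mySlice φ x)
    simpa [NNReal.smul_def] using this
  have h3 : (s.sup (schwartzSeminormFamily ℂ G ℂ)) (mySlice φ x)
      ≤ (s.sup (schwartzSeminormFamily ℂ (H × G) ℂ)) φ := by
    rw [Seminorm.finset_sup_apply, Seminorm.finset_sup_apply]
    norm_cast
    refine Finset.sup_mono_fun (fun i _ => ?_)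
    have := my_seminorm_slice_le φ x i.1 i.2
    simpa [← NNReal.coe_le_coe, schwartzSeminormFamily] using this
  have hq' : q (mySlice φ x) = SchwartzMap.seminorm ℂ k 0 (T (mySlice φ x)) := rfl
  calc ‖w‖ ^ k * ‖𝓕 (⇑(mySlice φ x)) w‖ ≤ q (mySlice φ x) := by rw [hq']; exact h1
    _ ≤ C * (s.sup (schwartzSeminormFamily ℂ G ℂ)) (mySlice φ x) := h2
    _ ≤ C * (s.sup (schwartzSeminormFamily ℂ (H × G) ℂ)) φ :=
        mul_le_mul_of_nonneg_left h3 (by positivity)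

end AuxDecay

/-- The partial Fourier transform in the momentum variable:
`(F_pφ)(x,y) = ∫ φ(x,p) e^{-ip·y} dp`. -/
noncomputable def partialFourierP (d : ℕ)
    (φ : EuclideanSpace ℝ (Fin d) × EuclideanSpace ℝ (Fin d) → ℂ)
    (x y : EuclideanSpace ℝ (Fin d)) : ℂ :=
  ∫ p : EuclideanSpace ℝ (Fin d), φ (x, p) * Complex.exp (-Complex.I * (⟪p, y⟫ : ℂ))

section AuxMain

open scoped FourierTransform ENNReal NNReal

variable {d : ℕ}

local notation "E" => EuclideanSpace ℝ (Fin d)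

lemma my_partialFourierP_eq (φ : SchwartzMap (E × E) ℂ) (x y : E) :
    partialFourierP d (fun q => φ q) x y = 𝓕 (⇑(mySlice φ x)) ((2 * Real.pi)⁻¹ • y) := by
  rw [Real.fourier_eq']
  unfold partialFourierP
  congr 1
  funext p
  rw [mySlice_apply, real_inner_smul_right]
  have h : -2 * Real.pi * ((2 * Real.pi)⁻¹ * ⟪p, y⟫) = -⟪p, y⟫ := by
    have h2 : (2 * Real.pi) ≠ 0 := by positivity
    field_simp
  rw [h, smul_eq_mul, mul_comm]
  congr 2
  push_cast
  ring

/-- Uniform pointwise bound on a Schwartz function of two variables, integrable in `p`. -/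
lemma my_phi_bound (φ : SchwartzMap (E × E) ℂ) :
    ∃ B : ℝ, 0 ≤ B ∧ ∀ (x p : E), ‖φ (x, p)‖ ≤ B * (1 + ‖p‖) ^ (-(d + 1 : ℝ)) := by
  set B := (2:ℝ) ^ (d+1) *
    ((Finset.Iic ((d+1, 0) : ℕ × ℕ)).sup (schwartzSeminormFamily ℝ (E × E) ℂ)) φ with hB
  have hB0 : 0 ≤ B := by positivity
  refine ⟨B, hB0, fun x p => ?_⟩
  have key : (1 + ‖(x, p)‖) ^ (d+1) * ‖φ (x, p)‖ ≤ B := by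
    have := SchwartzMap.one_add_le_sup_seminorm_apply (𝕜 := ℝ) (m := ((d+1 : ℕ), 0))
      (k := d+1) (n := 0) le_rfl le_rfl φ (x, p)
    rw [hB]
    simp only [norm_iteratedFDeriv_zero] at this
    exact this
  have hpos : (0:ℝ) < 1 + ‖p‖ := by positivity
  have hmono : (1 + ‖p‖) ^ (d+1) * ‖φ (x, p)‖ ≤ B := by
    refine le_trans ?_ key
    refine mul_le_mul_of_nonneg_right (pow_le_pow_left₀ (by positivity) ?_ _) (norm_nonneg _)
    simpa using by linarith [norm_snd_le (x, p)]
  rw [show (-(d + 1 : ℝ)) = -((d+1 : ℕ) : ℝ) by push_cast; ring, Real.rpow_neg hpos.le,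
    Real.rpow_natCast, ← div_eq_mul_inv, le_div_iff₀ (by positivity)]
  linarith [hmono]

lemma my_F_continuous (φ : SchwartzMap (E × E) ℂ) :
    Continuous (fun z : E × E => partialFourierP d (fun q => φ q) z.1 z.2) := by
  obtain ⟨B, hB0, hB⟩ := my_phi_bound φ
  simp only [partialFourierP]
  refine continuous_of_dominated (F := fun (z : E × E) (p : E) =>
      φ (z.1, p) * Complex.exp (-Complex.I * (⟪p, z.2⟫ : ℂ)))
    (bound := fun p => B * (1 + ‖p‖) ^ (-(d + 1 : ℝ))) ?_ ?_ ?_ ?_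
  · intro z
    refine Continuous.aestronglyMeasurable ?_
    refine (φ.continuous.comp (by fun_prop)).mul ?_
    refine Complex.continuous_exp.comp ?_
    refine (continuous_const.mul ?_)
    exact Complex.continuous_ofReal.comp (continuous_id.inner continuous_const)
  · intro z
    refine Eventually.of_forall (fun p => ?_)
    have hexp : ‖Complex.exp (-Complex.I * (⟪p, z.2⟫ : ℂ))‖ = 1 := by
      rw [show -Complex.I * (⟪p, z.2⟫ : ℂ) = ((-⟪p, z.2⟫ : ℝ) : ℂ) * Complex.I by
        push_cast; ring]
      exact Complex.norm_exp_ofReal_mul_I _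
    rw [norm_mul, hexp, mul_one]
    exact hB z.1 p
  · exact (integrable_one_add_norm (by
      simp only [finrank_euclideanSpace_fin]; exact_mod_cast lt_add_one d)).const_mul B
  · refine Eventually.of_forall (fun p => ?_)
    refine (φ.continuous.comp (by fun_prop)).mul ?_
    refine Complex.continuous_exp.comp ?_
    refine (continuous_const.mul ?_)
    exact Complex.continuous_ofReal.comp (continuous_const.inner continuous_snd)

lemma my_F_decay (φ : SchwartzMap (E × E) ℂ) (k : ℕ) :
    ∃ C : ℝ, 0 ≤ C ∧ ∀ (x y : E),
      ‖y‖ ^ k * ‖partialFourierP d (fun q => φ q) x y‖ ≤ C := by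
  obtain ⟨C, hC0, hC⟩ := my_exists_decay φ k
  refine ⟨(2 * Real.pi) ^ k * C, by positivity, fun x y => ?_⟩
  have hw : ‖y‖ = (2 * Real.pi) * ‖(2 * Real.pi)⁻¹ • y‖ := by
    rw [norm_smul, Real.norm_eq_abs, abs_of_pos (by positivity)]
    field_simp
  rw [my_partialFourierP_eq, hw, mul_pow, mul_assoc]
  exact mul_le_mul_of_nonneg_left (hC x _) (by positivity)

/-- The shear `z ↦ z.1 + r • z.2` is quasi measure preserving on `E × E`. -/
lemma my_qmp (r : ℝ) : Measure.QuasiMeasurePreserving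
    (fun z : E × E => z.1 + r • z.2) (volume : Measure (E × E)) (volume : Measure E) := by
  have hS : MeasurePreserving (fun w : E × E => (w.1, w.2 + r • w.1))
      ((volume : Measure E).prod volume) ((volume : Measure E).prod volume) := by
    have hgm : Measurable (Function.uncurry fun (a b : E) => b + r • a) :=
      measurable_snd.add (measurable_fst.const_smul r)
    have hg : ∀ᵐ a ∂(volume : Measure E),
        Measure.map (fun b => b + r • a) volume = volume :=
      Eventually.of_forall (fun a => map_add_right_eq_self volume (r • a))
    exact (MeasurePreserving.id (volume : Measure E)).skew_product
      (g := fun (a b : E) => b + r • a) hgm hg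
  have heq : (fun z : E × E => z.1 + r • z.2) =
      Prod.snd ∘ (fun w : E × E => (w.1, w.2 + r • w.1)) ∘ Prod.swap := by
    funext z; simp
  rw [heq, Measure.volume_eq_prod]
  exact (Measure.quasiMeasurePreserving_snd).comp
    (hS.quasiMeasurePreserving.comp (Measure.measurePreserving_swap).quasiMeasurePreserving)

end AuxMain

open scoped ENNReal NNReal

/-- Bound on the potential term of the Wigner equation for a Lipschitz potential `V`:
the integrand is absolutely integrable and
`|∫ [(V(x+εy/2)−V(x−εy/2))/ε] Ψ(x+εy/2) conj(Ψ(x−εy/2)) (F_pφ)(x,y) d(x,y)|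
  ≤ L ‖Ψ‖² ∫ |y| sup_x |(F_pφ)(x,y)| dy`. -/
theorem lipschitz_potential_term_bound (d : ℕ) (hd : 1 ≤ d) (ε : ℝ) (hε : 0 < ε)
    (V : EuclideanSpace ℝ (Fin d) → ℝ) (L : ℝ)
    (hV : ∀ a b : EuclideanSpace ℝ (Fin d), |V a - V b| ≤ L * ‖a - b‖)
    (Ψ : EuclideanSpace ℝ (Fin d) → ℂ)
    (hΨ : MemLp Ψ 2 (volume : Measure (EuclideanSpace ℝ (Fin d))))
    (φ : SchwartzMap (EuclideanSpace ℝ (Fin d) × EuclideanSpace ℝ (Fin d)) ℂ) :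
    Integrable (fun z : EuclideanSpace ℝ (Fin d) × EuclideanSpace ℝ (Fin d) =>
        (((V (z.1 + (ε / 2) • z.2) - V (z.1 - (ε / 2) • z.2)) / ε : ℝ) : ℂ) *
          Ψ (z.1 + (ε / 2) • z.2) * (starRingEnd ℂ) (Ψ (z.1 - (ε / 2) • z.2)) *
          partialFourierP d (fun q => φ q) z.1 z.2) ∧
      ‖∫ z : EuclideanSpace ℝ (Fin d) × EuclideanSpace ℝ (Fin d),
          (((V (z.1 + (ε / 2) • z.2) - V (z.1 - (ε / 2) • z.2)) / ε : ℝ) : ℂ) *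
            Ψ (z.1 + (ε / 2) • z.2) * (starRingEnd ℂ) (Ψ (z.1 - (ε / 2) • z.2)) *
            partialFourierP d (fun q => φ q) z.1 z.2‖ ≤
        L * (eLpNorm Ψ 2 volume).toReal ^ 2 *
          ∫ y : EuclideanSpace ℝ (Fin d),
            ‖y‖ * ⨆ x : EuclideanSpace ℝ (Fin d), ‖partialFourierP d (fun q => φ q) x y‖ := by
  classical
  set P : EuclideanSpace ℝ (Fin d) → EuclideanSpace ℝ (Fin d) → ℂ :=
    partialFourierP d (fun q => φ q) with hP
  set g : EuclideanSpace ℝ (Fin d) → ℝ := fun y => ⨆ x : EuclideanSpace ℝ (Fin d), ‖P x y‖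
    with hg
  set f : EuclideanSpace ℝ (Fin d) × EuclideanSpace ℝ (Fin d) → ℂ := fun z =>
    (((V (z.1 + (ε / 2) • z.2) - V (z.1 - (ε / 2) • z.2)) / ε : ℝ) : ℂ) *
      Ψ (z.1 + (ε / 2) • z.2) * (starRingEnd ℂ) (Ψ (z.1 - (ε / 2) • z.2)) *
      P z.1 z.2 with hf
  -- nonnegativity of L
  have hL0 : 0 ≤ L := by
    have hb : ‖(0 : EuclideanSpace ℝ (Fin d)) -
        EuclideanSpace.single (⟨0, hd⟩ : Fin d) (1 : ℝ)‖ = 1 := by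
      rw [zero_sub, norm_neg, EuclideanSpace.norm_single]
      exact norm_one
    have := hV 0 (EuclideanSpace.single (⟨0, hd⟩ : Fin d) (1 : ℝ))
    rw [hb, mul_one] at this
    exact le_trans (abs_nonneg _) this
  -- bounds on partialFourierP
  obtain ⟨C₀, hC₀0, hC₀⟩ := my_F_decay φ 0
  obtain ⟨K, hK0, hK⟩ := my_F_decay φ (d + 2)
  have hC₀' : ∀ x y : EuclideanSpace ℝ (Fin d), ‖P x y‖ ≤ C₀ := fun x y => by
    simpa using hC₀ x y
  have hKP : ∀ x y : EuclideanSpace ℝ (Fin d), ‖y‖ ^ (d + 2) * ‖P x y‖ ≤ K := fun x y => hK x y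
  have hbdd : ∀ y : EuclideanSpace ℝ (Fin d),
      BddAbove (Set.range fun x : EuclideanSpace ℝ (Fin d) => ‖P x y‖) := fun y =>
    ⟨C₀, by rintro _ ⟨x, rfl⟩; exact hC₀' x y⟩
  have hFle : ∀ x y : EuclideanSpace ℝ (Fin d), ‖P x y‖ ≤ g y := fun x y =>
    le_ciSup (hbdd y) x
  have hg0 : ∀ y : EuclideanSpace ℝ (Fin d), 0 ≤ g y := fun y =>
    le_trans (norm_nonneg (P 0 y)) (hFle 0 y)
  have hgC₀ : ∀ y : EuclideanSpace ℝ (Fin d), g y ≤ C₀ := fun y => ciSup_le fun x => hC₀' x y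
  have hgK : ∀ y : EuclideanSpace ℝ (Fin d), ‖y‖ ^ (d + 2) * g y ≤ K := by
    intro y
    rcases eq_or_ne ‖y‖ 0 with h0 | h0
    · simp only [h0, zero_pow (Nat.succ_ne_zero _), zero_mul]
      exact hK0
    · have hpos : (0 : ℝ) < ‖y‖ ^ (d + 2) := by
        have : 0 < ‖y‖ := lt_of_le_of_ne (norm_nonneg y) (Ne.symm h0)
        positivity
      rw [mul_comm, ← le_div_iff₀ hpos]
      refine ciSup_le fun x => ?_
      rw [le_div_iff₀ hpos, mul_comm]
      exact hKP x y
  -- measurability of g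
  have hcont : ∀ y : EuclideanSpace ℝ (Fin d),
      Continuous fun x : EuclideanSpace ℝ (Fin d) => ‖P x y‖ := by
    intro y
    exact ((my_F_continuous φ).comp (continuous_id.prodMk continuous_const)).norm
  have hgmeas : Measurable g := by
    obtain ⟨u, hu⟩ := TopologicalSpace.exists_dense_seq (EuclideanSpace ℝ (Fin d))
    have hgeq : g = fun y => ⨆ n : ℕ, ‖P (u n) y‖ := by
      funext y
      apply le_antisymm
      · refine ciSup_le fun x => ?_
        obtain ⟨v, hv_mem, hv_lim⟩ := mem_closure_iff_seq_limit.mp (hu x)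
        have hb2 : BddAbove (Set.range fun n : ℕ => ‖P (u n) y‖) :=
          ⟨C₀, by rintro _ ⟨n, rfl⟩; exact hC₀' (u n) y⟩
        refine le_of_tendsto (((hcont y).tendsto x).comp hv_lim) ?_
        refine Eventually.of_forall fun k => ?_
        simp only [Function.comp_apply]
        obtain ⟨n, hn⟩ := hv_mem k
        rw [← hn]
        exact le_ciSup hb2 n
      · exact ciSup_le fun n => le_ciSup (hbdd y) (u n)
    rw [hgeq]
    refine Measurable.iSup fun n => Continuous.measurable ?_
    exact ((my_F_continuous φ).comp (continuous_const.prodMk continuous_id)).norm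
  -- pointwise decay bound on ‖y‖ * g y
  set M0 : ℝ := 2 ^ (d + 1) * max C₀ K with hM0
  have hM00 : 0 ≤ M0 := by positivity
  have key : ∀ y : EuclideanSpace ℝ (Fin d), (‖y‖ * g y) * (1 + ‖y‖) ^ (d + 1) ≤ M0 := by
    intro y
    set t := ‖y‖ with ht
    have ht0 : 0 ≤ t := norm_nonneg y
    have h1 : (1 + t) ^ (d + 1) ≤ 2 ^ (d + 1) * max 1 t ^ (d + 1) := by
      rw [← mul_pow]
      refine pow_le_pow_left₀ (by positivity) ?_ _
      rcases le_total t 1 with h | h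
      · rw [max_eq_left h]; linarith
      · rw [max_eq_right h]; linarith
    have h2 : (t * g y) * (max 1 t) ^ (d + 1) ≤ max C₀ K := by
      rcases le_total t 1 with h | h
      · rw [max_eq_left h, one_pow, mul_one]
        calc t * g y ≤ 1 * C₀ :=
              mul_le_mul h (hgC₀ y) (hg0 y) zero_le_one
          _ = C₀ := one_mul _
          _ ≤ max C₀ K := le_max_left _ _
      · rw [max_eq_right h]
        have he : t * g y * t ^ (d + 1) = t ^ (d + 2) * g y := by ring
        rw [he]
        exact (hgK y).trans (le_max_right _ _)
    calc (t * g y) * (1 + t) ^ (d + 1)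
        ≤ (t * g y) * (2 ^ (d + 1) * max 1 t ^ (d + 1)) := by
          refine mul_le_mul_of_nonneg_left h1 (mul_nonneg ht0 (hg0 y))
      _ = 2 ^ (d + 1) * ((t * g y) * (max 1 t) ^ (d + 1)) := by ring
      _ ≤ 2 ^ (d + 1) * max C₀ K := by
          exact mul_le_mul_of_nonneg_left h2 (by positivity)
  have h_ptbound : ∀ y : EuclideanSpace ℝ (Fin d),
      ‖y‖ * g y ≤ M0 * (1 + ‖y‖) ^ (-(d + 1 : ℝ)) := by
    intro y
    have hpos : (0 : ℝ) < 1 + ‖y‖ := by positivity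
    rw [show (-(d + 1 : ℝ)) = -((d + 1 : ℕ) : ℝ) by push_cast; ring, Real.rpow_neg hpos.le,
      Real.rpow_natCast, ← div_eq_mul_inv, le_div_iff₀ (by positivity)]
    exact key y
  -- integrability of the decay bound
  have hMint : Integrable (fun y : EuclideanSpace ℝ (Fin d) =>
      M0 * (1 + ‖y‖) ^ (-(d + 1 : ℝ))) volume :=
    (integrable_one_add_norm (by
      simp only [finrank_euclideanSpace_fin]; exact_mod_cast lt_add_one d)).const_mul M0
  have h_int : Integrable (fun y : EuclideanSpace ℝ (Fin d) => ‖y‖ * g y) volume := by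
    refine hMint.mono' ?_ (Eventually.of_forall fun y => ?_)
    · exact (continuous_norm.measurable.mul hgmeas).aestronglyMeasurable
    · rw [Real.norm_of_nonneg (mul_nonneg (norm_nonneg _) (hg0 y))]
      exact h_ptbound y
  -- measurability of the integrand
  set N : ℝ≥0∞ := eLpNorm Ψ 2 volume with hN
  have hN_ne : N ≠ ∞ := hΨ.2.ne
  set w : EuclideanSpace ℝ (Fin d) → ℝ≥0∞ := fun y => ENNReal.ofReal (L * (‖y‖ * g y)) with hw
  have hw_meas : Measurable w :=
    (measurable_const.mul (continuous_norm.measurable.mul hgmeas)).ennreal_ofReal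
  have hΨ1 : AEStronglyMeasurable
      (fun z : EuclideanSpace ℝ (Fin d) × EuclideanSpace ℝ (Fin d) =>
        Ψ (z.1 + (ε / 2) • z.2)) volume :=
    hΨ.1.comp_quasiMeasurePreserving (my_qmp (ε / 2))
  have hΨ2 : AEStronglyMeasurable
      (fun z : EuclideanSpace ℝ (Fin d) × EuclideanSpace ℝ (Fin d) =>
        Ψ (z.1 - (ε / 2) • z.2)) volume := by
    have h := hΨ.1.comp_quasiMeasurePreserving (my_qmp (d := d) (-(ε / 2)))
    have heq : (fun z : EuclideanSpace ℝ (Fin d) × EuclideanSpace ℝ (Fin d) =>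
        Ψ (z.1 - (ε / 2) • z.2)) = fun z => Ψ (z.1 + (-(ε / 2)) • z.2) := by
      funext z; rw [neg_smul, ← sub_eq_add_neg]
    rw [heq]
    exact h
  have hVc : Continuous V := by
    have hlip : LipschitzWith (Real.toNNReal L) V := by
      refine LipschitzWith.of_dist_le_mul fun a b => ?_
      rw [Real.dist_eq, dist_eq_norm]
      refine le_trans (hV a b) (mul_le_mul_of_nonneg_right ?_ (norm_nonneg _))
      rw [Real.coe_toNNReal']
      exact le_max_left _ _
    exact hlip.continuous
  have cA : Continuous (fun z : EuclideanSpace ℝ (Fin d) × EuclideanSpace ℝ (Fin d) =>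
      z.1 + (ε / 2) • z.2) := by fun_prop
  have cB : Continuous (fun z : EuclideanSpace ℝ (Fin d) × EuclideanSpace ℝ (Fin d) =>
      z.1 - (ε / 2) • z.2) := by fun_prop
  have c1 : Continuous (fun z : EuclideanSpace ℝ (Fin d) × EuclideanSpace ℝ (Fin d) =>
      ((((V (z.1 + (ε / 2) • z.2) - V (z.1 - (ε / 2) • z.2)) / ε : ℝ)) : ℂ)) :=
    Complex.continuous_ofReal.comp (((hVc.comp cA).sub (hVc.comp cB)).div_const ε)
  have hconj : AEStronglyMeasurable
      (fun z : EuclideanSpace ℝ (Fin d) × EuclideanSpace ℝ (Fin d) =>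
        (starRingEnd ℂ) (Ψ (z.1 - (ε / 2) • z.2))) volume :=
    Complex.continuous_conj.comp_aestronglyMeasurable hΨ2
  have f_aesm : AEStronglyMeasurable f volume := by
    rw [hf]
    exact ((c1.aestronglyMeasurable.mul hΨ1).mul hconj).mul
      ((my_F_continuous φ).aestronglyMeasurable)
  -- pointwise bound
  have hpt : ∀ z : EuclideanSpace ℝ (Fin d) × EuclideanSpace ℝ (Fin d),
      ‖f z‖ ≤ (L * (‖z.2‖ * g z.2)) *
        (‖Ψ (z.1 + (ε / 2) • z.2)‖ * ‖Ψ (z.1 - (ε / 2) • z.2)‖) := by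
    intro z
    have hV1 : ‖((((V (z.1 + (ε / 2) • z.2) - V (z.1 - (ε / 2) • z.2)) / ε : ℝ)) : ℂ)‖
        ≤ L * ‖z.2‖ := by
      rw [Complex.norm_real, Real.norm_eq_abs, abs_div, abs_of_pos hε, div_le_iff₀ hε]
      calc |V (z.1 + (ε / 2) • z.2) - V (z.1 - (ε / 2) • z.2)|
          ≤ L * ‖(z.1 + (ε / 2) • z.2) - (z.1 - (ε / 2) • z.2)‖ := hV _ _
        _ = L * ‖z.2‖ * ε := by
            have he : (z.1 + (ε / 2) • z.2) - (z.1 - (ε / 2) • z.2) = ε • z.2 := by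
              module
            rw [he, norm_smul, Real.norm_eq_abs, abs_of_pos hε]; ring
    have hLz : 0 ≤ L * ‖z.2‖ := le_trans (norm_nonneg _) hV1
    have hnorm : ‖f z‖ =
        ‖((((V (z.1 + (ε / 2) • z.2) - V (z.1 - (ε / 2) • z.2)) / ε : ℝ)) : ℂ)‖ *
          ‖Ψ (z.1 + (ε / 2) • z.2)‖ * ‖Ψ (z.1 - (ε / 2) • z.2)‖ * ‖P z.1 z.2‖ := by
      rw [hf]
      simp [norm_mul, RCLike.norm_conj]
    rw [hnorm]
    calc ‖((((V (z.1 + (ε / 2) • z.2) - V (z.1 - (ε / 2) • z.2)) / ε : ℝ)) : ℂ)‖ *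
          ‖Ψ (z.1 + (ε / 2) • z.2)‖ * ‖Ψ (z.1 - (ε / 2) • z.2)‖ * ‖P z.1 z.2‖
        ≤ (L * ‖z.2‖) * ‖Ψ (z.1 + (ε / 2) • z.2)‖ * ‖Ψ (z.1 - (ε / 2) • z.2)‖ * g z.2 := by
          refine mul_le_mul (mul_le_mul (mul_le_mul hV1 le_rfl (norm_nonneg _) hLz) le_rfl
            (norm_nonneg _) (mul_nonneg hLz (norm_nonneg _))) (hFle z.1 z.2) (norm_nonneg _)
            (mul_nonneg (mul_nonneg hLz (norm_nonneg _)) (norm_nonneg _))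
      _ = (L * (‖z.2‖ * g z.2)) *
            (‖Ψ (z.1 + (ε / 2) • z.2)‖ * ‖Ψ (z.1 - (ε / 2) • z.2)‖) := by ring
  have hpt' : ∀ z : EuclideanSpace ℝ (Fin d) × EuclideanSpace ℝ (Fin d),
      (‖f z‖₊ : ℝ≥0∞) ≤ w z.2 * ((‖Ψ (z.1 + (ε / 2) • z.2)‖₊ : ℝ≥0∞) *
        (‖Ψ (z.1 - (ε / 2) • z.2)‖₊ : ℝ≥0∞)) := by
    intro z
    calc (‖f z‖₊ : ℝ≥0∞) = ENNReal.ofReal ‖f z‖ := (ofReal_norm _).symm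
      _ ≤ ENNReal.ofReal ((L * (‖z.2‖ * g z.2)) *
          (‖Ψ (z.1 + (ε / 2) • z.2)‖ * ‖Ψ (z.1 - (ε / 2) • z.2)‖)) :=
          ENNReal.ofReal_le_ofReal (hpt z)
      _ = w z.2 * ((‖Ψ (z.1 + (ε / 2) • z.2)‖₊ : ℝ≥0∞) *
          (‖Ψ (z.1 - (ε / 2) • z.2)‖₊ : ℝ≥0∞)) := by
          rw [ENNReal.ofReal_mul (mul_nonneg hL0 (mul_nonneg (norm_nonneg _) (hg0 _))),
            ENNReal.ofReal_mul (norm_nonneg _), ofReal_norm,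
            ofReal_norm, enorm_eq_nnnorm, enorm_eq_nnnorm]
  -- Hölder estimate for the inner integral
  have hNsq : ∀ y : EuclideanSpace ℝ (Fin d),
      (∫⁻ x : EuclideanSpace ℝ (Fin d), ((‖Ψ (x + (ε / 2) • y)‖₊ : ℝ≥0∞) *
        (‖Ψ (x - (ε / 2) • y)‖₊ : ℝ≥0∞)) ∂volume) ≤ N * N := by
    intro y
    have hconj2 : Real.HolderConjugate 2 2 := Real.HolderConjugate.two_two
    have h1m : AEMeasurable (fun x : EuclideanSpace ℝ (Fin d) =>
        ((‖Ψ (x + (ε / 2) • y)‖₊ : ℝ≥0∞))) volume :=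
      (hΨ.1.comp_quasiMeasurePreserving
        (measurePreserving_add_right volume ((ε / 2) • y)).quasiMeasurePreserving).enorm
    have h2m : AEMeasurable (fun x : EuclideanSpace ℝ (Fin d) =>
        ((‖Ψ (x - (ε / 2) • y)‖₊ : ℝ≥0∞))) volume := by
      have := (hΨ.1.comp_quasiMeasurePreserving
        (measurePreserving_add_right volume (-((ε / 2) • y))).quasiMeasurePreserving).enorm
      simp only [sub_eq_add_neg]
      exact this
    have hH := ENNReal.lintegral_mul_le_Lp_mul_Lq volume hconj2 h1m h2m
    simp only [Pi.mul_apply] at hH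
    have ht1 : (∫⁻ x : EuclideanSpace ℝ (Fin d),
        (‖Ψ (x + (ε / 2) • y)‖₊ : ℝ≥0∞) ^ (2:ℝ) ∂volume) =
        ∫⁻ x : EuclideanSpace ℝ (Fin d), (‖Ψ x‖₊ : ℝ≥0∞) ^ (2:ℝ) ∂volume :=
      lintegral_add_right_eq_self (fun x => (‖Ψ x‖₊ : ℝ≥0∞) ^ (2:ℝ)) ((ε / 2) • y)
    have ht2 : (∫⁻ x : EuclideanSpace ℝ (Fin d),
        (‖Ψ (x - (ε / 2) • y)‖₊ : ℝ≥0∞) ^ (2:ℝ) ∂volume) =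
        ∫⁻ x : EuclideanSpace ℝ (Fin d), (‖Ψ x‖₊ : ℝ≥0∞) ^ (2:ℝ) ∂volume := by
      have := lintegral_add_right_eq_self (μ := volume)
        (fun x : EuclideanSpace ℝ (Fin d) => (‖Ψ x‖₊ : ℝ≥0∞) ^ (2:ℝ)) (-((ε / 2) • y))
      simpa [sub_eq_add_neg] using this
    have hNval : N = (∫⁻ x : EuclideanSpace ℝ (Fin d),
        (‖Ψ x‖₊ : ℝ≥0∞) ^ (2:ℝ) ∂volume) ^ (1/(2:ℝ)) := by
      rw [hN, eLpNorm_eq_lintegral_rpow_enorm_toReal two_ne_zero ENNReal.ofNat_ne_top]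
      norm_num
      rfl
    refine le_trans hH ?_
    rw [ht1, ht2, ← hNval]
  -- the product-measure measurability
  have hprod_meas : AEMeasurable
      (fun z : EuclideanSpace ℝ (Fin d) × EuclideanSpace ℝ (Fin d) =>
        w z.2 * ((‖Ψ (z.1 + (ε / 2) • z.2)‖₊ : ℝ≥0∞) * (‖Ψ (z.1 - (ε / 2) • z.2)‖₊ : ℝ≥0∞)))
      ((volume : Measure (EuclideanSpace ℝ (Fin d))).prod volume) := by
    have h0 : AEMeasurable
        (fun z : EuclideanSpace ℝ (Fin d) × EuclideanSpace ℝ (Fin d) =>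
          w z.2 * ((‖Ψ (z.1 + (ε / 2) • z.2)‖₊ : ℝ≥0∞) * (‖Ψ (z.1 - (ε / 2) • z.2)‖₊ : ℝ≥0∞)))
        (volume : Measure (EuclideanSpace ℝ (Fin d) × EuclideanSpace ℝ (Fin d))) :=
      ((hw_meas.comp measurable_snd).aemeasurable).mul (hΨ1.enorm.mul hΨ2.enorm)
    rwa [Measure.volume_eq_prod] at h0
  -- main lintegral estimate
  have main_le : (∫⁻ z : EuclideanSpace ℝ (Fin d) × EuclideanSpace ℝ (Fin d),
      (‖f z‖₊ : ℝ≥0∞) ∂volume) ≤ (∫⁻ y : EuclideanSpace ℝ (Fin d), w y ∂volume) * (N * N) := by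
    calc (∫⁻ z : EuclideanSpace ℝ (Fin d) × EuclideanSpace ℝ (Fin d),
        (‖f z‖₊ : ℝ≥0∞) ∂volume)
        ≤ ∫⁻ z : EuclideanSpace ℝ (Fin d) × EuclideanSpace ℝ (Fin d),
            w z.2 * ((‖Ψ (z.1 + (ε / 2) • z.2)‖₊ : ℝ≥0∞) *
              (‖Ψ (z.1 - (ε / 2) • z.2)‖₊ : ℝ≥0∞)) ∂volume := lintegral_mono hpt'
      _ = ∫⁻ y : EuclideanSpace ℝ (Fin d), ∫⁻ x : EuclideanSpace ℝ (Fin d),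
            w y * ((‖Ψ (x + (ε / 2) • y)‖₊ : ℝ≥0∞) *
              (‖Ψ (x - (ε / 2) • y)‖₊ : ℝ≥0∞)) ∂volume ∂volume := by
          rw [Measure.volume_eq_prod, lintegral_prod_symm _ hprod_meas]
      _ ≤ ∫⁻ y : EuclideanSpace ℝ (Fin d), w y * (N * N) ∂volume := by
          refine lintegral_mono fun y => ?_
          rw [lintegral_const_mul' _ _ ENNReal.ofReal_ne_top]
          exact mul_le_mul_right (hNsq y) _
      _ = (∫⁻ y : EuclideanSpace ℝ (Fin d), w y ∂volume) * (N * N) :=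
          lintegral_mul_const' _ _ (ENNReal.mul_ne_top hN_ne hN_ne)
  have h_intL : Integrable (fun y : EuclideanSpace ℝ (Fin d) => L * (‖y‖ * g y)) volume :=
    h_int.const_mul L
  have hw_eq : (∫⁻ y : EuclideanSpace ℝ (Fin d), w y ∂volume) =
      ENNReal.ofReal (∫ y : EuclideanSpace ℝ (Fin d), L * (‖y‖ * g y) ∂volume) :=
    (ofReal_integral_eq_lintegral_ofReal h_intL (Eventually.of_forall fun y =>
      mul_nonneg hL0 (mul_nonneg (norm_nonneg _) (hg0 y)))).symm
  have hfin_top : (∫⁻ y : EuclideanSpace ℝ (Fin d), w y ∂volume) * (N * N) ≠ ⊤ := by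
    rw [hw_eq]
    exact ENNReal.mul_ne_top ENNReal.ofReal_ne_top (ENNReal.mul_ne_top hN_ne hN_ne)
  have hintf : Integrable f volume :=
    ⟨f_aesm, lt_of_le_of_lt main_le (lt_top_iff_ne_top.mpr hfin_top)⟩
  constructor
  · exact hintf
  · have hb1 : ‖∫ z : EuclideanSpace ℝ (Fin d) × EuclideanSpace ℝ (Fin d), f z ∂volume‖ ≤
        ∫ z : EuclideanSpace ℝ (Fin d) × EuclideanSpace ℝ (Fin d), ‖f z‖ ∂volume :=
      norm_integral_le_integral_norm _
    have hb2 : (∫ z : EuclideanSpace ℝ (Fin d) × EuclideanSpace ℝ (Fin d), ‖f z‖ ∂volume) =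
        (∫⁻ z : EuclideanSpace ℝ (Fin d) × EuclideanSpace ℝ (Fin d),
          (‖f z‖₊ : ℝ≥0∞) ∂volume).toReal :=
      integral_norm_eq_lintegral_enorm f_aesm
    have hb3 : (∫⁻ z : EuclideanSpace ℝ (Fin d) × EuclideanSpace ℝ (Fin d),
        (‖f z‖₊ : ℝ≥0∞) ∂volume).toReal ≤
        ((∫⁻ y : EuclideanSpace ℝ (Fin d), w y ∂volume) * (N * N)).toReal :=
      ENNReal.toReal_mono hfin_top main_le
    have hnn : 0 ≤ ∫ y : EuclideanSpace ℝ (Fin d), L * (‖y‖ * g y) ∂volume :=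
      integral_nonneg fun y => mul_nonneg hL0 (mul_nonneg (norm_nonneg _) (hg0 y))
    have hb4 : ((∫⁻ y : EuclideanSpace ℝ (Fin d), w y ∂volume) * (N * N)).toReal =
        (∫ y : EuclideanSpace ℝ (Fin d), L * (‖y‖ * g y) ∂volume) * (N.toReal * N.toReal) := by
      rw [hw_eq, ENNReal.toReal_mul, ENNReal.toReal_mul, ENNReal.toReal_ofReal hnn]
    have hb5 : (∫ y : EuclideanSpace ℝ (Fin d), L * (‖y‖ * g y) ∂volume) =
        L * ∫ y : EuclideanSpace ℝ (Fin d), ‖y‖ * g y ∂volume := by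
      exact integral_const_mul L _
    calc ‖∫ z : EuclideanSpace ℝ (Fin d) × EuclideanSpace ℝ (Fin d), f z ∂volume‖
        ≤ (∫⁻ z : EuclideanSpace ℝ (Fin d) × EuclideanSpace ℝ (Fin d),
            (‖f z‖₊ : ℝ≥0∞) ∂volume).toReal := by rw [← hb2]; exact hb1
      _ ≤ ((∫⁻ y : EuclideanSpace ℝ (Fin d), w y ∂volume) * (N * N)).toReal := hb3
      _ = (∫ y : EuclideanSpace ℝ (Fin d), L * (‖y‖ * g y) ∂volume) *
            (N.toReal * N.toReal) := hb4
      _ = L * N.toReal ^ 2 * ∫ y : EuclideanSpace ℝ (Fin d), ‖y‖ * g y ∂volume := by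
          rw [hb5]; ring
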